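/- Let λ = (a_1,…,a_n) ∈ ℂ^n and 1 ≤ m ≤ n−1 be such that a_i ≻ a_{i+1} for all 1 ≤ i ≤ n−1 with i ≠ m, and either a_m = a_{m+1} ≠ 0, or a_m = −1/2 and a_{m+1} = 1/2 (so λ is a singular W̃-maximal weight with s_m * λ = λ). Then s_1 s_2 ⋯ s_m * λ = s_1 s_2 ⋯ s_{m−1} * λ, and setting (b_1,…,b_n) := s_1 ⋯ s_{m−1} * λ one has b_i ≻ b_{i+1} for all 2 ≤ i ≤ n−1. -/

import Mathlib

open Finset

/-- The 1-based `i`-th coordinate of a weight `λ ∈ ℂ^n` (0 if out of range). -/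
def coord {n : ℕ} (lam : Fin n → ℂ) (i : ℕ) : ℂ :=
  if h : 1 ≤ i ∧ i ≤ n then lam ⟨i - 1, by omega⟩ else 0

/-- The star action of the generator `s_i` (1 ≤ i ≤ n-1) on weights:
swap coordinates `i` and `i+1` if their sum is nonzero, otherwise replace
`(λ_i, λ_{i+1})` by `(λ_{i+1} - 1, λ_i + 1)`. -/
noncomputable def sStar {n : ℕ} (i : ℕ) (lam : Fin n → ℂ) : Fin n → ℂ := fun j =>
  if (j : ℕ) + 1 = i then
    (if coord lam i + coord lam (i + 1) = 0 then coord lam (i + 1) - 1 else coord lam (i + 1))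
  else if (j : ℕ) = i then
    (if coord lam i + coord lam (i + 1) = 0 then coord lam i + 1 else coord lam i)
  else lam j

/-- The partial order on weights: `μ ≤ ν` iff each partial sum
`Σ_{j=1}^i (ν_j - μ_j)` (1 ≤ i ≤ n-1) is a nonnegative integer and the
total sum `Σ_{j=1}^n (ν_j - μ_j)` is zero. -/
def wle {n : ℕ} (mu nu : Fin n → ℂ) : Prop :=
  (∀ i : ℕ, 1 ≤ i → i ≤ n - 1 →
    ∃ m : ℕ, ∑ j ∈ Finset.Icc 1 i, (coord nu j - coord mu j) = (m : ℂ)) ∧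
  ∑ j ∈ Finset.Icc 1 n, (coord nu j - coord mu j) = 0

/-- Strict inequality of weights. -/
def wlt {n : ℕ} (mu nu : Fin n → ℂ) : Prop := wle mu nu ∧ mu ≠ nu

/-- `a ≻ b` iff `a - b ∈ ℤ_{>0}` or `a = b = 0`. -/
def csucc (a b : ℂ) : Prop := (∃ m : ℤ, 0 < m ∧ a - b = (m : ℂ)) ∨ (a = 0 ∧ b = 0)

/-- `starDesc j k λ = s_j s_{j+1} ⋯ s_k * λ` (apply `s_k` first, `s_j` last);
equals `λ` when `j > k`. -/
noncomputable def starDesc {n : ℕ} (j k : ℕ) (lam : Fin n → ℂ) : Fin n → ℂ :=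
  (List.range' j (k + 1 - j)).foldr (fun i mu => sStar i mu) lam

/-- `starAsc j k λ = s_k s_{k-1} ⋯ s_j * λ` (apply `s_j` first, `s_k` last);
equals `λ` when `j > k`. -/
noncomputable def starAsc {n : ℕ} (j k : ℕ) (lam : Fin n → ℂ) : Fin n → ℂ :=
  (List.range' j (k + 1 - j)).foldl (fun mu i => sStar i mu) lam

-- basic lemmas
lemma coord_def {n : ℕ} (lam : Fin n → ℂ) (j : ℕ) (h1 : 1 ≤ j) (h2 : j ≤ n) :
    coord lam j = lam ⟨j - 1, by omega⟩ := by
  unfold coord; rw [dif_pos ⟨h1, h2⟩]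

lemma coord_sStar_ne {n : ℕ} (i : ℕ) (mu : Fin n → ℂ) (j : ℕ)
    (hj1 : 1 ≤ j) (h1 : j ≠ i) (h2 : j ≠ i + 1) :
    coord (sStar i mu) j = coord mu j := by
  unfold coord sStar
  by_cases h : 1 ≤ j ∧ j ≤ n
  · rw [dif_pos h, dif_pos h]
    simp only
    rw [if_neg (by omega : ¬ ((j-1) + 1 = i)), if_neg (by omega : ¬ (j - 1 = i))]
  · rw [dif_neg h, dif_neg h]

lemma coord_sStar_self {n : ℕ} (i : ℕ) (mu : Fin n → ℂ) (hi1 : 1 ≤ i) (hi2 : i ≤ n) :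
    coord (sStar i mu) i =
      if coord mu i + coord mu (i + 1) = 0 then coord mu (i + 1) - 1 else coord mu (i + 1) := by
  conv_lhs => unfold coord sStar
  rw [dif_pos ⟨hi1, hi2⟩]
  simp only
  rw [if_pos (by omega : (i-1) + 1 = i)]

lemma coord_sStar_succ {n : ℕ} (i : ℕ) (mu : Fin n → ℂ) (hi1 : 1 ≤ i) (hi2 : i + 1 ≤ n) :
    coord (sStar i mu) (i + 1) =
      if coord mu i + coord mu (i + 1) = 0 then coord mu i + 1 else coord mu i := by
  conv_lhs => unfold coord sStar
  rw [dif_pos ⟨by omega, hi2⟩]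
  simp only
  rw [if_neg (by omega : ¬ ((i + 1 - 1) + 1 = i)), if_pos (by omega : i + 1 - 1 = i)]

lemma csucc_sub (a b : ℂ) (h : csucc a b) : ∃ s : ℕ, a - b = (s : ℂ) := by
  rcases h with ⟨m, hm, he⟩ | ⟨ha, hb⟩
  · exact ⟨m.toNat, by rw [he]; norm_cast; omega⟩
  · exact ⟨0, by simp [ha, hb]⟩

lemma csucc_sub_pos (a b : ℂ) (h : csucc a b) (hb : b ≠ 0 ∨ a ≠ 0) :
    ∃ s : ℕ, 0 < s ∧ a - b = (s : ℂ) := by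
  rcases h with ⟨m, hm, he⟩ | ⟨ha, hb'⟩
  · exact ⟨m.toNat, by omega, by rw [he]; norm_cast; omega⟩
  · tauto

lemma csucc_of_nat (a b : ℂ) (s : ℕ) (hs : 0 < s) (h : a - b = (s : ℂ)) : csucc a b :=
  Or.inl ⟨s, by exact_mod_cast hs, by exact_mod_cast h⟩

-- chain lemma
lemma chain_sub {n : ℕ} (lam : Fin n → ℂ) (m : ℕ) (hm2 : m ≤ n - 1)
    (h1 : ∀ i, 1 ≤ i → i ≤ n - 1 → i ≠ m → csucc (coord lam i) (coord lam (i + 1))) :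
    ∀ d a, 1 ≤ a → a + d = m → ∃ s : ℕ, coord lam a - coord lam m = (s : ℂ) := by
  intro d
  induction d with
  | zero =>
    intro a _ h
    exact ⟨0, by rw [Nat.add_zero] at h; rw [h]; simp⟩
  | succ d ih =>
    intro a ha h
    obtain ⟨s, hs⟩ := ih (a + 1) (by omega) (by omega)
    obtain ⟨s', hs'⟩ := csucc_sub _ _ (h1 a ha (by omega) (by omega))
    exact ⟨s' + s, by push_cast; linear_combination hs + hs'⟩

-- the invariant
def StarInv {n : ℕ} (lam : Fin n → ℂ) (m k : ℕ) (mu : Fin n → ℂ) : Prop :=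
  (∀ j, 1 ≤ j → j + 1 ≤ k → coord mu j = coord lam j) ∧
  (∀ i, k + 1 ≤ i → i ≤ n - 1 → csucc (coord mu i) (coord mu (i + 1))) ∧
  (coord mu (k + 1) = coord lam k ∨
    (coord mu (k + 1) = coord lam k + 1 ∧ coord mu k = -coord lam k - 1 ∧ coord lam k ≠ 0)) ∧
  (coord mu k = coord lam m ∨
    (∃ t : ℕ, 1 ≤ t ∧ coord mu k = coord lam m - (t : ℂ) ∧
      ∃ s : ℕ, -(2 * coord lam m) = (s : ℂ)))

lemma inv_step {n : ℕ} (lam : Fin n → ℂ) (m : ℕ) (hn : 2 ≤ n) (hm1 : 1 ≤ m) (hm2 : m ≤ n - 1)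
    (h1 : ∀ i, 1 ≤ i → i ≤ n - 1 → i ≠ m → csucc (coord lam i) (coord lam (i + 1)))
    (h2 : (coord lam m = coord lam (m + 1) ∧ coord lam m ≠ 0) ∨
          (coord lam m = -(1 / 2) ∧ coord lam (m + 1) = 1 / 2))
    (k : ℕ) (hk1 : 1 ≤ k) (hk2 : k + 1 ≤ m)
    (mu : Fin n → ℂ) (hinv : StarInv lam m (k + 1) mu) :
    StarInv lam m k (sStar k mu) := by
  obtain ⟨hA, hB, hC, hD⟩ := hinv
  have hlamm_ne : coord lam m ≠ 0 := by
    rcases h2 with ⟨_, h⟩ | ⟨h, _⟩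
    · exact h
    · rw [h]; norm_num
  have hmuk : coord mu k = coord lam k := hA k hk1 (le_refl _)
  have hself := coord_sStar_self k mu hk1 (by omega)
  have hsucc := coord_sStar_succ k mu hk1 (by omega)
  rw [hmuk] at hself hsucc
  have hc2 : coord (sStar k mu) (k + 1 + 1) = coord mu (k + 1 + 1) :=
    coord_sStar_ne k mu (k + 1 + 1) (by omega) (by omega) (by omega)
  by_cases hzero : coord lam k + coord mu (k + 1) = 0
  · -- correction case
    rw [if_pos hzero] at hself hsucc
    -- coord lam k ≠ 0
    have hmuk1_ne : coord mu (k + 1) ≠ 0 := by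
      rcases hD with h | ⟨t, ht, hc, s, hs⟩
      · rw [h]; exact hlamm_ne
      · intro h0
        rw [h0] at hc
        have hn0 : ((s + 2 * t : ℕ) : ℂ) = 0 := by
          push_cast
          linear_combination (-1 : ℂ) * hs + 2 * hc
        have : s + 2 * t = 0 := by exact_mod_cast hn0
        omega
    have hlamk_ne : coord lam k ≠ 0 := by
      intro h0; apply hmuk1_ne; rw [h0] at hzero; linear_combination hzero
    refine ⟨?_, ?_, ?_, ?_⟩
    · intro j hj1 hj2
      rw [coord_sStar_ne k mu j hj1 (by omega) (by omega)]
      exact hA j hj1 (by omega)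
    · intro i hi1 hi2
      rcases Nat.eq_or_lt_of_le hi1 with hik | hik
      · -- i = k + 1
        subst hik
        rw [hsucc, hc2]
        rcases hC with h | ⟨e1, e2, e3⟩
        · rw [h]
          obtain ⟨s, hs, hcs⟩ := csucc_sub_pos _ _
            (h1 k hk1 (by omega) (by omega)) (Or.inr hlamk_ne)
          exact csucc_of_nat _ _ (s + 1) (by omega) (by push_cast; linear_combination hcs)
        · rw [e1]
          have hlk : coord lam k = coord lam (k + 1) + 1 := by
            rw [e2] at hzero; linear_combination hzero
          exact csucc_of_nat _ _ 1 (by omega) (by push_cast; linear_combination hlk)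
      · have hi : k + 2 ≤ i := hik
        rw [coord_sStar_ne k mu i (by omega) (by omega) (by omega),
            coord_sStar_ne k mu (i + 1) (by omega) (by omega) (by omega)]
        exact hB i (by omega) hi2
    · right
      refine ⟨hsucc, ?_, hlamk_ne⟩
      rw [hself]
      linear_combination hzero
    · rcases hD with h | ⟨t, ht, hc, s, hs⟩
      · right
        obtain ⟨s, hcs⟩ := chain_sub lam m hm2 h1 (m - k) k hk1 (by omega)
        refine ⟨1, le_refl _, ?_, s, ?_⟩
        · rw [hself, h]; push_cast; ring
        · have hlk : coord lam k = -coord lam m := by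
            rw [h] at hzero; linear_combination hzero
          rw [hlk] at hcs
          linear_combination hcs
      · right
        exact ⟨t + 1, by omega, by rw [hself, hc]; push_cast; ring, s, hs⟩
  · -- swap case
    rw [if_neg hzero] at hself hsucc
    refine ⟨?_, ?_, ?_, ?_⟩
    · intro j hj1 hj2
      rw [coord_sStar_ne k mu j hj1 (by omega) (by omega)]
      exact hA j hj1 (by omega)
    · intro i hi1 hi2
      rcases Nat.eq_or_lt_of_le hi1 with hik | hik
      · -- i = k + 1
        subst hik
        rw [hsucc, hc2]
        rcases hC with h | ⟨e1, e2, e3⟩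
        · rw [h]; exact h1 k hk1 (by omega) (by omega)
        · rw [e1]
          obtain ⟨s, hs, hcs⟩ := csucc_sub_pos _ _
            (h1 k hk1 (by omega) (by omega)) (Or.inl e3)
          have hs1 : s ≠ 1 := by
            intro h1'
            apply hzero
            rw [h1'] at hcs
            push_cast at hcs
            rw [e2]
            linear_combination hcs
          refine csucc_of_nat _ _ (s - 1) (by omega) ?_
          rw [Nat.cast_sub (by omega : 1 ≤ s)]
          push_cast
          linear_combination hcs
      · have hi : k + 2 ≤ i := hik
        rw [coord_sStar_ne k mu i (by omega) (by omega) (by omega),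
            coord_sStar_ne k mu (i + 1) (by omega) (by omega) (by omega)]
        exact hB i (by omega) hi2
    · left; exact hsucc
    · rw [hself]; exact hD

lemma starDesc_nil {n : ℕ} (lam : Fin n → ℂ) (m : ℕ) (hm1 : 1 ≤ m) :
    starDesc m (m - 1) lam = lam := by
  unfold starDesc
  rw [(by omega : m - 1 + 1 - m = 0)]
  rfl

lemma starDesc_cons {n : ℕ} (lam : Fin n → ℂ) (m k : ℕ) (hm1 : 1 ≤ m) (hk : k ≤ m - 1) :
    starDesc k (m - 1) lam = sStar k (starDesc (k + 1) (m - 1) lam) := by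
  unfold starDesc
  rw [(by omega : m - 1 + 1 - k = (m - 1 + 1 - (k + 1)) + 1)]
  rw [List.range'_succ]
  rfl

lemma inv_base {n : ℕ} (lam : Fin n → ℂ) (m : ℕ) (hn : 2 ≤ n) (hm1 : 1 ≤ m) (hm2 : m ≤ n - 1)
    (h1 : ∀ i, 1 ≤ i → i ≤ n - 1 → i ≠ m → csucc (coord lam i) (coord lam (i + 1)))
    (h2 : (coord lam m = coord lam (m + 1) ∧ coord lam m ≠ 0) ∨
          (coord lam m = -(1 / 2) ∧ coord lam (m + 1) = 1 / 2)) :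
    StarInv lam m m lam := by
  refine ⟨fun j _ _ => rfl, fun i hi1 hi2 => h1 i (by omega) hi2 (by omega), ?_, Or.inl rfl⟩
  rcases h2 with ⟨a1, a2⟩ | ⟨b1, b2⟩
  · exact Or.inl a1.symm
  · refine Or.inr ⟨by rw [b1, b2]; norm_num, by rw [b1]; norm_num, by rw [b1]; norm_num⟩

lemma inv_all {n : ℕ} (lam : Fin n → ℂ) (m : ℕ) (hn : 2 ≤ n) (hm1 : 1 ≤ m) (hm2 : m ≤ n - 1)
    (h1 : ∀ i, 1 ≤ i → i ≤ n - 1 → i ≠ m → csucc (coord lam i) (coord lam (i + 1)))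
    (h2 : (coord lam m = coord lam (m + 1) ∧ coord lam m ≠ 0) ∨
          (coord lam m = -(1 / 2) ∧ coord lam (m + 1) = 1 / 2)) :
    ∀ d, d ≤ m - 1 → StarInv lam m (m - d) (starDesc (m - d) (m - 1) lam) := by
  intro d
  induction d with
  | zero =>
    intro _
    rw [Nat.sub_zero, starDesc_nil lam m hm1]
    exact inv_base lam m hn hm1 hm2 h1 h2
  | succ d ih =>
    intro hd
    have hk : m - (d + 1) + 1 = m - d := by omega
    have ih' := ih (by omega)
    rw [← hk] at ih'
    rw [starDesc_cons lam m (m - (d + 1)) hm1 (by omega)]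
    exact inv_step lam m hn hm1 hm2 h1 h2 (m - (d + 1)) (by omega) (by omega) _ ih'

lemma sStar_fix {n : ℕ} (lam : Fin n → ℂ) (m : ℕ) (hn : 2 ≤ n) (hm1 : 1 ≤ m) (hm2 : m ≤ n - 1)
    (h2 : (coord lam m = coord lam (m + 1) ∧ coord lam m ≠ 0) ∨
          (coord lam m = -(1 / 2) ∧ coord lam (m + 1) = 1 / 2)) :
    sStar m lam = lam := by
  have e1 : coord lam m = lam ⟨m - 1, by omega⟩ := coord_def lam m hm1 (by omega)
  have e2 : coord lam (m + 1) = lam ⟨m + 1 - 1, by omega⟩ :=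
    coord_def lam (m + 1) (by omega) (by omega)
  funext j
  simp only [sStar]
  rcases h2 with ⟨a1, a2⟩ | ⟨b1, b2⟩
  · have hsum : ¬ (coord lam m + coord lam (m + 1) = 0) := by
      rw [← a1]; intro h; exact a2 (add_self_eq_zero.mp h)
    rw [if_neg hsum, if_neg hsum]
    by_cases hj1 : (j : ℕ) + 1 = m
    · rw [if_pos hj1, ← a1, e1]
      exact congrArg lam (Fin.ext (by simp; omega)).symm
    · rw [if_neg hj1]
      by_cases hj2 : (j : ℕ) = m
      · rw [if_pos hj2, a1, e2]
        exact congrArg lam (Fin.ext (by simp; omega)).symm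
      · rw [if_neg hj2]
  · have hsum : coord lam m + coord lam (m + 1) = 0 := by rw [b1, b2]; ring
    rw [if_pos hsum, if_pos hsum]
    by_cases hj1 : (j : ℕ) + 1 = m
    · rw [if_pos hj1]
      have hjv : lam j = coord lam m := by
        rw [e1]; exact congrArg lam (Fin.ext (by simp; omega))
      rw [hjv, b1, b2]; norm_num
    · rw [if_neg hj1]
      by_cases hj2 : (j : ℕ) = m
      · rw [if_pos hj2]
        have hjv : lam j = coord lam (m + 1) := by
          rw [e2]; exact congrArg lam (Fin.ext (by simp; omega))
        rw [hjv, b1, b2]; norm_num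
      · rw [if_neg hj2]

theorem stmt14 (n : ℕ) (hn : 2 ≤ n) (lam : Fin n → ℂ) (m : ℕ)
    (hm1 : 1 ≤ m) (hm2 : m ≤ n - 1)
    (h1 : ∀ i, 1 ≤ i → i ≤ n - 1 → i ≠ m → csucc (coord lam i) (coord lam (i + 1)))
    (h2 : (coord lam m = coord lam (m + 1) ∧ coord lam m ≠ 0) ∨
          (coord lam m = -(1 / 2) ∧ coord lam (m + 1) = 1 / 2)) :
    starDesc 1 m lam = starDesc 1 (m - 1) lam ∧
    (∀ i, 2 ≤ i → i ≤ n - 1 →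
      csucc (coord (starDesc 1 (m - 1) lam) i) (coord (starDesc 1 (m - 1) lam) (i + 1))) := by
  constructor
  · unfold starDesc
    rw [(by omega : m + 1 - 1 = m), (by omega : m - 1 + 1 - 1 = m - 1)]
    have hr : List.range' 1 m = List.range' 1 (m - 1) ++ [m] := by
      have h := List.range'_concat (step := 1) (s := 1) (n := m - 1)
      rw [(by omega : m - 1 + 1 = m)] at h
      rw [h]
      congr 2
      omega
    rw [hr, List.foldr_append]
    simp only [List.foldr]
    rw [sStar_fix lam m hn hm1 hm2 h2]
  · intro i hi1 hi2
    have h := inv_all lam m hn hm1 hm2 h1 h2 (m - 1) (le_refl _)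
    rw [(by omega : m - (m - 1) = 1)] at h
    exact h.2.1 i (by omega) hi2
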